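/- (Gradient approximation bound) Let ρ★ = U★ U★^H where U★ ∈ ℂ^{D×r} satisfies ‖U★‖_F = 1, and suppose the measurement map 𝒜 satisfies the (3r, δ)-RIP. Let ŷ ∈ ℝ^K, e_k = ŷ_k − trace(A_k ρ★). If U ∈ ℂ^{D×r} satisfies min_{R' unitary} ‖U − U★R'‖_F ≤ σ_r(U★)/4, then ‖G(U) − (U U^H − ρ★)·U‖_F ≤ (5δ/2)·‖U U^H − ρ★‖_F + (5D/(4K))·‖𝒜*(e)‖. -/

import Mathlib

open Matrix
open scoped BigOperators ComplexOrder
open scoped ComplexConjugate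

/-- Frobenius norm of a complex matrix. -/
noncomputable def frobNorm {m n : ℕ} (A : Matrix (Fin m) (Fin n) ℂ) : ℝ :=
  Real.sqrt (∑ i, ∑ j, ‖A i j‖ ^ 2)

/-- Spectral norm (largest singular value) of a complex matrix, as the operator
norm of the induced map between Euclidean spaces. -/
noncomputable def specNorm {m n : ℕ} (A : Matrix (Fin m) (Fin n) ℂ) : ℝ :=
  ‖LinearMap.toContinuousLinearMap (Matrix.toEuclideanLin A)‖

/-- The measurement map `𝒜(ρ)_k = trace (A k * ρ)` satisfies the `(s, δ)`-RIP. -/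
def IsRIP {D K : ℕ} (A : Fin K → Matrix (Fin D) (Fin D) ℂ) (s : ℕ) (δ : ℝ) : Prop :=
  ∀ ρ : Matrix (Fin D) (Fin D) ℂ, ρ.rank ≤ s →
    (1 - δ) * frobNorm ρ ^ 2 ≤ ((D : ℝ) / (K : ℝ)) * ∑ k, ‖Matrix.trace (A k * ρ)‖ ^ 2 ∧
      ((D : ℝ) / (K : ℝ)) * ∑ k, ‖Matrix.trace (A k * ρ)‖ ^ 2 ≤ (1 + δ) * frobNorm ρ ^ 2

/-- The adjoint of the measurement map: `𝒜*(e) = Σ_k e_k A_k`. -/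
noncomputable def adjointMap {D K : ℕ} (A : Fin K → Matrix (Fin D) (Fin D) ℂ)
    (e : Fin K → ℝ) : Matrix (Fin D) (Fin D) ℂ :=
  ∑ k, (e k : ℂ) • A k

/-- The Wirtinger gradient `G(U) = (D/K) Σ_k (trace(A_k U Uᴴ) − ŷ_k) A_k U`. -/
noncomputable def wGrad {D K r : ℕ} (A : Fin K → Matrix (Fin D) (Fin D) ℂ)
    (yhat : Fin K → ℝ) (U : Matrix (Fin D) (Fin r) ℂ) : Matrix (Fin D) (Fin r) ℂ :=
  ((D : ℂ) / (K : ℂ)) • ∑ k, (Matrix.trace (A k * (U * Uᴴ)) - (yhat k : ℂ)) • (A k * U)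

/-- The Wirtinger Hessian quadratic form at `U` in direction `Δ`. -/
noncomputable def wHess {D K r : ℕ} (A : Fin K → Matrix (Fin D) (Fin D) ℂ)
    (yhat : Fin K → ℝ) (U Δ : Matrix (Fin D) (Fin r) ℂ) : ℝ :=
  (2 * (D : ℝ) / (K : ℝ)) * ∑ k, (‖Matrix.trace (A k * (U * Δᴴ))‖ ^ 2
      + ((Matrix.trace (A k * (U * Δᴴ))) ^ 2).re)
    + (2 * (D : ℝ) / (K : ℝ)) *
      (Matrix.trace ((∑ k, (Matrix.trace (A k * (U * Uᴴ)) - (yhat k : ℂ)) • A k)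
        * (Δ * Δᴴ))).re

/-- The function `h(δ)` from the recovery-error bound. -/
noncomputable def hfun (δ : ℝ) : ℝ :=
  (Real.sqrt 2 + Real.sqrt (82.55 - 762.54 * δ - 843.09 * δ ^ 2)) / (1.5 - 15.7 * δ)

/-- The smallest singular value `σ_r(X)`: the square root of the smallest
eigenvalue of `Xᴴ X`. -/
noncomputable def sigmaMin {D r : ℕ} (X : Matrix (Fin D) (Fin r) ℂ) : ℝ :=
  Real.sqrt (⨅ i : Fin r, (Matrix.isHermitian_conjTranspose_mul_self X).eigenvalues i)

noncomputable def toE {m n : ℕ} (X : Matrix (Fin m) (Fin n) ℂ) : EuclideanSpace ℂ (Fin m × Fin n) :=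
  (WithLp.equiv 2 _).symm (fun p => X p.1 p.2)

lemma toE_add {m n : ℕ} (X Y : Matrix (Fin m) (Fin n) ℂ) : toE (X + Y) = toE X + toE Y := rfl
lemma toE_sub {m n : ℕ} (X Y : Matrix (Fin m) (Fin n) ℂ) : toE (X - Y) = toE X - toE Y := rfl
lemma toE_smul {m n : ℕ} (c : ℂ) (X : Matrix (Fin m) (Fin n) ℂ) : toE (c • X) = c • toE X := rfl

lemma norm_toE {m n : ℕ} (X : Matrix (Fin m) (Fin n) ℂ) : ‖toE X‖ = frobNorm X := by
  rw [EuclideanSpace.norm_eq, frobNorm]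
  congr 1
  rw [Fintype.sum_prod_type]
  rfl

lemma inner_toE {m n : ℕ} (X Y : Matrix (Fin m) (Fin n) ℂ) :
    (inner ℂ (toE X) (toE Y) : ℂ) = Matrix.trace (Xᴴ * Y) := by
  simp only [PiLp.inner_apply, RCLike.inner_apply', toE, WithLp.equiv_symm_apply, PiLp.toLp_apply]
  rw [Fintype.sum_prod_type]
  rw [Matrix.trace]
  simp only [Matrix.diag_apply, Matrix.mul_apply, Matrix.conjTranspose_apply]
  rw [Finset.sum_comm]
  rfl

lemma frob_nonneg {m n : ℕ} (X : Matrix (Fin m) (Fin n) ℂ) : 0 ≤ frobNorm X :=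
  Real.sqrt_nonneg _

lemma frob_sq {m n : ℕ} (X : Matrix (Fin m) (Fin n) ℂ) :
    frobNorm X ^ 2 = (Matrix.trace (Xᴴ * X)).re := by
  rw [← norm_toE, ← inner_toE, norm_sq_eq_re_inner (𝕜 := ℂ)]
  rfl

lemma frob_eq_zero {m n : ℕ} {X : Matrix (Fin m) (Fin n) ℂ} (h : frobNorm X = 0) : X = 0 := by
  have : ‖toE X‖ = 0 := by rw [norm_toE, h]
  have h2 : toE X = 0 := norm_eq_zero.mp this
  ext i j
  have := congrArg (fun v => v (i, j)) h2
  exact this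

lemma frob_add_le {m n : ℕ} (X Y : Matrix (Fin m) (Fin n) ℂ) :
    frobNorm (X + Y) ≤ frobNorm X + frobNorm Y := by
  rw [← norm_toE, ← norm_toE, ← norm_toE, toE_add]; exact norm_add_le _ _

lemma frob_smul {m n : ℕ} (c : ℂ) (X : Matrix (Fin m) (Fin n) ℂ) :
    frobNorm (c • X) = ‖c‖ * frobNorm X := by
  rw [← norm_toE, ← norm_toE, toE_smul, norm_smul]

lemma frob_parallelogram {m n : ℕ} (X Y : Matrix (Fin m) (Fin n) ℂ) :
    frobNorm (X + Y) ^ 2 + frobNorm (X - Y) ^ 2 = 2 * (frobNorm X ^ 2 + frobNorm Y ^ 2) := by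
  rw [← norm_toE, ← norm_toE, ← norm_toE, ← norm_toE, toE_add, toE_sub]
  have := parallelogram_law_with_norm ℂ (toE X) (toE Y)
  linarith [this]

lemma frob_cauchy {m n : ℕ} (X Y : Matrix (Fin m) (Fin n) ℂ) :
    ‖Matrix.trace (Xᴴ * Y)‖ ≤ frobNorm X * frobNorm Y := by
  rw [← inner_toE, ← norm_toE, ← norm_toE]; exact norm_inner_le_norm _ _

lemma frob_conjT {m n : ℕ} (X : Matrix (Fin m) (Fin n) ℂ) : frobNorm Xᴴ = frobNorm X := by
  rw [frobNorm, frobNorm, Finset.sum_comm]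
  congr 1
  apply Finset.sum_congr rfl; intro i _; apply Finset.sum_congr rfl; intro j _
  simp [Matrix.conjTranspose_apply]

section FrobMul
attribute [local instance] Matrix.frobeniusSeminormedAddCommGroup

lemma frob_eq_frobenius {m n : ℕ} (X : Matrix (Fin m) (Fin n) ℂ) : frobNorm X = ‖X‖ := by
  rw [Matrix.frobenius_norm_def, frobNorm, Real.sqrt_eq_rpow]
  congr 1
  apply Finset.sum_congr rfl; intro i _; apply Finset.sum_congr rfl; intro j _
  rw [← Real.rpow_natCast ‖X i j‖ 2]
  norm_num

lemma frob_mul_le {l m n : ℕ} (X : Matrix (Fin l) (Fin m) ℂ) (Y : Matrix (Fin m) (Fin n) ℂ) :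
    frobNorm (X * Y) ≤ frobNorm X * frobNorm Y := by
  rw [frob_eq_frobenius, frob_eq_frobenius, frob_eq_frobenius]
  exact Matrix.frobenius_norm_mul X Y

end FrobMul

lemma aux_rank_add_le {m n : ℕ} (X Y : Matrix (Fin m) (Fin n) ℂ) :
    (X + Y).rank ≤ X.rank + Y.rank := by
  classical
  unfold Matrix.rank
  rw [Matrix.mulVecLin_add]
  have hle : LinearMap.range (X.mulVecLin + Y.mulVecLin) ≤
      LinearMap.range X.mulVecLin ⊔ LinearMap.range Y.mulVecLin := by
    rintro _ ⟨x, rfl⟩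
    exact Submodule.add_mem_sup ⟨x, rfl⟩ ⟨x, rfl⟩
  calc _ ≤ Module.finrank ℂ ↥(LinearMap.range X.mulVecLin ⊔ LinearMap.range Y.mulVecLin) :=
        Submodule.finrank_mono hle
    _ ≤ _ := Submodule.finrank_add_le_finrank_add_finrank _ _

lemma aux_rank_smul_le {m n : ℕ} (c : ℂ) (X : Matrix (Fin m) (Fin n) ℂ) :
    (c • X).rank ≤ X.rank := by
  have h : c • X = X * (c • (1 : Matrix (Fin n) (Fin n) ℂ)) := by
    rw [Matrix.mul_smul, Matrix.mul_one]
  rw [h]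
  exact Matrix.rank_mul_le_left X _

noncomputable def Ef {D K : ℕ} (A : Fin K → Matrix (Fin D) (Fin D) ℂ)
    (X Y : Matrix (Fin D) (Fin D) ℂ) : ℂ :=
  ((D : ℂ) / (K : ℂ)) * ∑ k, conj (Matrix.trace (A k * X)) * Matrix.trace (A k * Y)
    - Matrix.trace (Xᴴ * Y)

lemma Ef_zero_left {D K : ℕ} (A : Fin K → Matrix (Fin D) (Fin D) ℂ)
    (Y : Matrix (Fin D) (Fin D) ℂ) : Ef A 0 Y = 0 := by
  simp [Ef]

lemma Ef_smul_real {D K : ℕ} (A : Fin K → Matrix (Fin D) (Fin D) ℂ)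
    (X Y : Matrix (Fin D) (Fin D) ℂ) (a b : ℝ) :
    Ef A ((a : ℂ) • X) ((b : ℂ) • Y) = ((a * b : ℝ) : ℂ) * Ef A X Y := by
  have h1 : ∑ k, conj (Matrix.trace (A k * ((a : ℂ) • X)))
        * Matrix.trace (A k * ((b : ℂ) • Y))
      = (a : ℂ) * (b : ℂ) * ∑ k, conj (Matrix.trace (A k * X)) * Matrix.trace (A k * Y) := by
    rw [Finset.mul_sum]
    apply Finset.sum_congr rfl; intro k _
    rw [Matrix.mul_smul, Matrix.mul_smul, Matrix.trace_smul, Matrix.trace_smul, smul_eq_mul,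
      smul_eq_mul, _root_.map_mul, Complex.conj_ofReal]
    ring
  have h2 : (((a : ℂ) • X)ᴴ * ((b : ℂ) • Y)).trace
      = (a : ℂ) * (b : ℂ) * (Xᴴ * Y).trace := by
    rw [Matrix.conjTranspose_smul, Matrix.smul_mul, Matrix.mul_smul, Matrix.trace_smul,
      Matrix.trace_smul, smul_eq_mul, smul_eq_mul, Complex.star_def, Complex.conj_ofReal]
    ring
  rw [Ef, Ef, h1, h2]
  push_cast
  ring

lemma Ef_add_add {D K : ℕ} (A : Fin K → Matrix (Fin D) (Fin D) ℂ)
    (X Y : Matrix (Fin D) (Fin D) ℂ) :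
    Ef A (X + Y) (X + Y) = Ef A X X + Ef A X Y + Ef A Y X + Ef A Y Y := by
  simp only [Ef, Matrix.mul_add, Matrix.trace_add, map_add, Matrix.conjTranspose_add,
    Matrix.add_mul, add_mul, mul_add, Finset.sum_add_distrib]
  ring

lemma Ef_sub_sub {D K : ℕ} (A : Fin K → Matrix (Fin D) (Fin D) ℂ)
    (X Y : Matrix (Fin D) (Fin D) ℂ) :
    Ef A (X - Y) (X - Y) = Ef A X X - Ef A X Y - Ef A Y X + Ef A Y Y := by
  simp only [Ef, Matrix.mul_sub, Matrix.trace_sub, map_sub, Matrix.conjTranspose_sub,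
    Matrix.sub_mul, sub_mul, mul_sub, Finset.sum_sub_distrib]
  ring

lemma Ef_conj_symm {D K : ℕ} (A : Fin K → Matrix (Fin D) (Fin D) ℂ)
    (X Y : Matrix (Fin D) (Fin D) ℂ) :
    Ef A Y X = conj (Ef A X Y) := by
  have hc : conj ((D : ℂ) / (K : ℂ)) = (D : ℂ) / (K : ℂ) := by
    rw [map_div₀]; norm_num
  have ht : (Yᴴ * X).trace = conj ((Xᴴ * Y).trace) := by
    have : Yᴴ * X = (Xᴴ * Y)ᴴ := by
      rw [Matrix.conjTranspose_mul, Matrix.conjTranspose_conjTranspose]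
    rw [this, Matrix.trace_conjTranspose]
    rfl
  rw [Ef, Ef, map_sub, _root_.map_mul, hc, map_sum, ht]
  congr 2
  apply Finset.sum_congr rfl; intro k _
  rw [_root_.map_mul, Complex.conj_conj]
  ring

lemma Ef_self_re {D K : ℕ} (A : Fin K → Matrix (Fin D) (Fin D) ℂ)
    (X : Matrix (Fin D) (Fin D) ℂ) :
    (Ef A X X).re = ((D : ℝ) / (K : ℝ)) * (∑ k, ‖Matrix.trace (A k * X)‖ ^ 2)
      - frobNorm X ^ 2 := by
  have h1 : ((D : ℂ) / (K : ℂ)) * ∑ k, conj (Matrix.trace (A k * X)) * Matrix.trace (A k * X)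
      = ((((D : ℝ) / (K : ℝ)) * ∑ k, ‖Matrix.trace (A k * X)‖ ^ 2 : ℝ) : ℂ) := by
    have hterm : ∀ k : Fin K, conj (Matrix.trace (A k * X)) * Matrix.trace (A k * X)
        = ((‖Matrix.trace (A k * X)‖ ^ 2 : ℝ) : ℂ) := by
      intro k
      rw [mul_comm, Complex.mul_conj, Complex.normSq_eq_norm_sq]
    simp only [hterm]
    push_cast
    ring
  rw [Ef, h1, Complex.sub_re, Complex.ofReal_re, ← frob_sq]

lemma Ef_self_bound {D K r : ℕ} {A : Fin K → Matrix (Fin D) (Fin D) ℂ} {δ : ℝ}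
    (hRIP : IsRIP A (3 * r) δ) (X : Matrix (Fin D) (Fin D) ℂ) (hX : X.rank ≤ 3 * r) :
    |(Ef A X X).re| ≤ δ * frobNorm X ^ 2 := by
  obtain ⟨h1, h2⟩ := hRIP X hX
  rw [Ef_self_re]
  rw [abs_le]
  constructor <;> nlinarith [frob_nonneg X]

lemma Ef_re_polar {D K : ℕ} (A : Fin K → Matrix (Fin D) (Fin D) ℂ)
    (X Y : Matrix (Fin D) (Fin D) ℂ) :
    (Ef A X Y).re = ((Ef A (X + Y) (X + Y)).re - (Ef A (X - Y) (X - Y)).re) / 4 := by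
  rw [Ef_add_add, Ef_sub_sub]
  have h := Ef_conj_symm A X Y
  have : (Ef A Y X).re = (Ef A X Y).re := by rw [h, Complex.conj_re]
  simp only [Complex.add_re, Complex.sub_re]
  linarith

lemma Ef_polar_bound {D K r : ℕ} {A : Fin K → Matrix (Fin D) (Fin D) ℂ} {δ : ℝ}
    (hδ0 : 0 ≤ δ) (hRIP : IsRIP A (3 * r) δ) (X Y : Matrix (Fin D) (Fin D) ℂ)
    (hX : X.rank ≤ r) (hY : Y.rank ≤ 2 * r) :
    (Ef A X Y).re ≤ δ / 2 * (frobNorm X ^ 2 + frobNorm Y ^ 2) := by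
  have hplus : (X + Y).rank ≤ 3 * r := by
    calc (X + Y).rank ≤ X.rank + Y.rank := aux_rank_add_le X Y
      _ ≤ r + 2 * r := add_le_add hX hY
      _ = 3 * r := by ring
  have hminus : (X - Y).rank ≤ 3 * r := by
    rw [sub_eq_add_neg]
    calc (X + (-Y)).rank ≤ X.rank + (-Y).rank := aux_rank_add_le X _
      _ ≤ r + Y.rank := by
          have : (-Y).rank ≤ Y.rank := by
            have hneg : -Y = ((-1 : ℂ)) • Y := by simp
            rw [hneg]
            exact aux_rank_smul_le _ _
          exact add_le_add hX this
      _ ≤ r + 2 * r := by omega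
      _ = 3 * r := by ring
  have h1 := Ef_self_bound hRIP _ hplus
  have h2 := Ef_self_bound hRIP _ hminus
  have hpar := frob_parallelogram X Y
  rw [Ef_re_polar]
  rw [abs_le] at h1 h2
  nlinarith [h1.2, h2.1, hpar, hδ0, mul_le_mul_of_nonneg_left hpar.le hδ0]

lemma Ef_zero_right {D K : ℕ} (A : Fin K → Matrix (Fin D) (Fin D) ℂ)
    (X : Matrix (Fin D) (Fin D) ℂ) : Ef A X 0 = 0 := by
  simp [Ef]

lemma Ef_bound {D K r : ℕ} {A : Fin K → Matrix (Fin D) (Fin D) ℂ} {δ : ℝ}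
    (hδ0 : 0 ≤ δ) (hRIP : IsRIP A (3 * r) δ) (X Y : Matrix (Fin D) (Fin D) ℂ)
    (hX : X.rank ≤ r) (hY : Y.rank ≤ 2 * r) :
    (Ef A X Y).re ≤ δ * frobNorm X * frobNorm Y := by
  rcases eq_or_lt_of_le (frob_nonneg X) with hx | hx
  · have : X = 0 := frob_eq_zero hx.symm
    rw [this, Ef_zero_left]
    simp only [Complex.zero_re]
    exact mul_nonneg (mul_nonneg hδ0 (frob_nonneg _)) (frob_nonneg _)
  rcases eq_or_lt_of_le (frob_nonneg Y) with hy | hy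
  · have : Y = 0 := frob_eq_zero hy.symm
    rw [this, Ef_zero_right]
    simp only [Complex.zero_re]
    exact mul_nonneg (mul_nonneg hδ0 (frob_nonneg _)) (frob_nonneg _)
  set fx := frobNorm X with hfx
  set fy := frobNorm Y with hfy
  set c := Real.sqrt (fy / fx) with hcdef
  have hc : 0 < c := Real.sqrt_pos.mpr (div_pos hy hx)
  have hc2 : c ^ 2 = fy / fx := Real.sq_sqrt (le_of_lt (div_pos hy hx))
  have hrank1 : ((c : ℂ) • X).rank ≤ r := le_trans (aux_rank_smul_le _ _) hX
  have hrank2 : (((c⁻¹ : ℝ) : ℂ) • Y).rank ≤ 2 * r := le_trans (aux_rank_smul_le _ _) hY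
  have key := Ef_polar_bound hδ0 hRIP _ _ hrank1 hrank2
  rw [Ef_smul_real, mul_inv_cancel₀ (ne_of_gt hc)] at key
  simp only [Complex.ofReal_one, one_mul] at key
  rw [frob_smul, frob_smul, Complex.norm_real, Complex.norm_real, Real.norm_eq_abs,
    Real.norm_eq_abs, abs_of_pos hc, abs_of_pos (inv_pos.mpr hc)] at key
  have e1 : (c * fx) ^ 2 = fx * fy := by
    rw [mul_pow, hc2]; field_simp
  have e2 : (c⁻¹ * fy) ^ 2 = fx * fy := by
    rw [mul_pow, ← Real.sqrt_inv, Real.sq_sqrt (by positivity), inv_div]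
    field_simp
  rw [e1, e2] at key
  calc (Ef A X Y).re ≤ δ / 2 * (fx * fy + fx * fy) := key
    _ = δ * fx * fy := by ring

lemma specNorm_nonneg {m n : ℕ} (A : Matrix (Fin m) (Fin n) ℂ) : 0 ≤ specNorm A :=
  norm_nonneg _

lemma spec_mul_frob {D r : ℕ} (N : Matrix (Fin D) (Fin D) ℂ) (U : Matrix (Fin D) (Fin r) ℂ) :
    frobNorm (N * U) ≤ specNorm N * frobNorm U := by
  set c := specNorm N with hc
  have hc0 : 0 ≤ c := specNorm_nonneg N
  set x : Fin r → EuclideanSpace ℂ (Fin D) :=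
    fun j => (WithLp.equiv 2 (Fin D → ℂ)).symm (fun k => U k j) with hx
  have hxnorm : ∀ j, ‖x j‖ ^ 2 = ∑ i, ‖U i j‖ ^ 2 := by
    intro j
    rw [EuclideanSpace.norm_eq, Real.sq_sqrt (by positivity)]
    rfl
  have hcol : ∀ j, ∑ i, ‖(N * U) i j‖ ^ 2 = ‖Matrix.toEuclideanLin N (x j)‖ ^ 2 := by
    intro j
    rw [EuclideanSpace.norm_eq, Real.sq_sqrt (by positivity)]
    apply Finset.sum_congr rfl; intro i _
    rfl
  have hbound : ∀ j, ‖Matrix.toEuclideanLin N (x j)‖ ≤ c * ‖x j‖ := by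
    intro j
    exact (LinearMap.toContinuousLinearMap (Matrix.toEuclideanLin N)).le_opNorm (x j)
  have hS : ∑ i, ∑ j, ‖(N * U) i j‖ ^ 2 ≤ (c * frobNorm U) ^ 2 := by
    rw [Finset.sum_comm]
    calc ∑ j, ∑ i, ‖(N * U) i j‖ ^ 2 = ∑ j, ‖Matrix.toEuclideanLin N (x j)‖ ^ 2 := by
          exact Finset.sum_congr rfl fun j _ => hcol j
      _ ≤ ∑ j, (c * ‖x j‖) ^ 2 := by
          apply Finset.sum_le_sum; intro j _
          exact pow_le_pow_left₀ (norm_nonneg _) (hbound j) 2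
      _ = c ^ 2 * ∑ j, ‖x j‖ ^ 2 := by rw [Finset.mul_sum]; exact Finset.sum_congr rfl fun j _ => by ring
      _ = c ^ 2 * ∑ j, ∑ i, ‖U i j‖ ^ 2 := by rw [Finset.sum_congr rfl fun j _ => hxnorm j]
      _ = c ^ 2 * ∑ i, ∑ j, ‖U i j‖ ^ 2 := by rw [Finset.sum_comm]
      _ = (c * frobNorm U) ^ 2 := by
          rw [frobNorm, mul_pow, Real.sq_sqrt (by positivity)]
  calc frobNorm (N * U) = Real.sqrt (∑ i, ∑ j, ‖(N * U) i j‖ ^ 2) := rfl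
    _ ≤ Real.sqrt ((c * frobNorm U) ^ 2) := Real.sqrt_le_sqrt hS
    _ = c * frobNorm U := Real.sqrt_sq (mul_nonneg hc0 (frob_nonneg U))

lemma sigmaMin_le_one {D r : ℕ} (hr : 0 < r) (Ustar : Matrix (Fin D) (Fin r) ℂ)
    (hU : frobNorm Ustar = 1) : sigmaMin Ustar ≤ 1 := by
  set hH := Matrix.isHermitian_conjTranspose_mul_self Ustar with hHdef
  have hev : ∀ i, 0 ≤ hH.eigenvalues i := fun i =>
    (Matrix.posSemidef_conjTranspose_mul_self Ustar).eigenvalues_nonneg i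
  have htr : (Matrix.trace (Ustarᴴ * Ustar)).re = ∑ i, hH.eigenvalues i := by
    rw [hH.trace_eq_sum_eigenvalues]
    rw [Complex.re_sum]
    apply Finset.sum_congr rfl; intro i _
    simp
  have hsum : ∑ i, hH.eigenvalues i = 1 := by
    rw [← htr, ← frob_sq, hU]; norm_num
  have hinf : (⨅ i, hH.eigenvalues i) ≤ 1 := by
    have i0 : Fin r := ⟨0, hr⟩
    calc ⨅ i, hH.eigenvalues i ≤ hH.eigenvalues i0 := ciInf_le (Finite.bddBelow_range _) i0
      _ ≤ ∑ i, hH.eigenvalues i := Finset.single_le_sum (fun i _ => hev i) (Finset.mem_univ i0)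
      _ = 1 := hsum
  rw [sigmaMin]
  calc Real.sqrt (⨅ i, hH.eigenvalues i) ≤ Real.sqrt 1 := Real.sqrt_le_sqrt hinf
    _ = 1 := Real.sqrt_one

lemma frob_sub_le {m n : ℕ} (X Y : Matrix (Fin m) (Fin n) ℂ) :
    frobNorm (X - Y) ≤ frobNorm X + frobNorm Y := by
  rw [← norm_toE, ← norm_toE, ← norm_toE, toE_sub]; exact norm_sub_le _ _

lemma trace_conjT_herm {D : ℕ} {B : Matrix (Fin D) (Fin D) ℂ} (hB : B.IsHermitian)
    (W : Matrix (Fin D) (Fin D) ℂ) :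
    Matrix.trace (Wᴴ * B) = conj (Matrix.trace (B * W)) := by
  have h : Wᴴ * B = (B * W)ᴴ := by rw [Matrix.conjTranspose_mul, hB.eq]
  rw [h, Matrix.trace_conjTranspose]
  rfl

lemma trace_VMU {D r : ℕ} (V U : Matrix (Fin D) (Fin r) ℂ) (M : Matrix (Fin D) (Fin D) ℂ) :
    Matrix.trace (Vᴴ * (M * U)) = Matrix.trace ((V * Uᴴ)ᴴ * M) := by
  rw [Matrix.conjTranspose_mul, Matrix.conjTranspose_conjTranspose]
  calc Matrix.trace (Vᴴ * (M * U)) = Matrix.trace ((Vᴴ * M) * U) := by rw [Matrix.mul_assoc]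
    _ = Matrix.trace (U * (Vᴴ * M)) := Matrix.trace_mul_comm _ _
    _ = Matrix.trace ((U * Vᴴ) * M) := by rw [Matrix.mul_assoc]

lemma aux_MU_bound {D K r : ℕ} {A : Fin K → Matrix (Fin D) (Fin D) ℂ} {δ : ℝ}
    (hδ0 : 0 ≤ δ) (hRIP : IsRIP A (3 * r) δ) (hA : ∀ k, (A k).IsHermitian)
    (Z : Matrix (Fin D) (Fin D) ℂ) (hZ : Z.rank ≤ 2 * r) (U : Matrix (Fin D) (Fin r) ℂ) :
    frobNorm ((((D : ℂ) / (K : ℂ)) • ∑ k, Matrix.trace (A k * Z) • A k - Z) * U)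
      ≤ δ * frobNorm Z * frobNorm U := by
  set P : Matrix (Fin D) (Fin D) ℂ := ∑ k, Matrix.trace (A k * Z) • A k with hP
  set Mmat : Matrix (Fin D) (Fin D) ℂ := ((D : ℂ) / (K : ℂ)) • P - Z with hM
  set V : Matrix (Fin D) (Fin r) ℂ := Mmat * U with hV
  set W : Matrix (Fin D) (Fin D) ℂ := V * Uᴴ with hW
  have hWrank : W.rank ≤ r := by
    calc W.rank ≤ (Uᴴ).rank := Matrix.rank_mul_le_right V Uᴴ
      _ = U.rank := Matrix.rank_conjTranspose U
      _ ≤ r := Matrix.rank_le_width U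
  have htrAk : ∀ k, Matrix.trace (Wᴴ * A k) = conj (Matrix.trace (A k * W)) :=
    fun k => trace_conjT_herm (hA k) W
  have htrP : Matrix.trace (Wᴴ * P) = ∑ k, Matrix.trace (A k * Z) * conj (Matrix.trace (A k * W)) := by
    rw [hP, Matrix.mul_sum, Matrix.trace_sum]
    apply Finset.sum_congr rfl; intro k _
    rw [Matrix.mul_smul, Matrix.trace_smul, smul_eq_mul, htrAk]
  have hkey : Matrix.trace (Vᴴ * V) = Ef A W Z := by
    have h1 : Vᴴ * V = Vᴴ * (Mmat * U) := by rw [← hV]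
    have h2 : Matrix.trace (Vᴴ * (Mmat * U)) = Matrix.trace (Wᴴ * Mmat) := by
      rw [hW]
      exact trace_VMU V U Mmat
    rw [h1, h2, hM, Matrix.mul_sub, Matrix.trace_sub, Matrix.mul_smul, Matrix.trace_smul,
      smul_eq_mul, htrP, Ef]
    congr 1
    rw [Finset.mul_sum, Finset.mul_sum]
    apply Finset.sum_congr rfl; intro k _
    ring
  have hfV : frobNorm V ^ 2 = (Ef A W Z).re := by rw [frob_sq, hkey]
  have hEb : (Ef A W Z).re ≤ δ * frobNorm W * frobNorm Z := by
    have := Ef_bound hδ0 hRIP W Z hWrank hZ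
    linarith
  have hfW : frobNorm W ≤ frobNorm V * frobNorm U := by
    calc frobNorm W ≤ frobNorm V * frobNorm Uᴴ := frob_mul_le V Uᴴ
      _ = frobNorm V * frobNorm U := by rw [frob_conjT]
  rcases eq_or_lt_of_le (frob_nonneg V) with hv | hv
  · rw [← hv]
    have := frob_nonneg Z; have := frob_nonneg U
    positivity
  · have h2 : frobNorm V ^ 2 ≤ δ * (frobNorm V * frobNorm U) * frobNorm Z := by
      calc frobNorm V ^ 2 = (Ef A W Z).re := hfV
        _ ≤ δ * frobNorm W * frobNorm Z := hEb
        _ ≤ δ * (frobNorm V * frobNorm U) * frobNorm Z :=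
            mul_le_mul_of_nonneg_right (mul_le_mul_of_nonneg_left hfW hδ0) (frob_nonneg Z)
    nlinarith [h2, hv]

lemma aux_rank_sub_le_2r {D r : ℕ} (U Ustar : Matrix (Fin D) (Fin r) ℂ) :
    (U * Uᴴ - Ustar * Ustarᴴ).rank ≤ 2 * r := by
  have h1 : (U * Uᴴ).rank ≤ r := le_trans (Matrix.rank_mul_le_left U Uᴴ) (Matrix.rank_le_width U)
  have h2 : (Ustar * Ustarᴴ).rank ≤ r :=
    le_trans (Matrix.rank_mul_le_left Ustar Ustarᴴ) (Matrix.rank_le_width Ustar)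
  have h3 : (-(Ustar * Ustarᴴ)).rank ≤ r := by
    have hneg : -(Ustar * Ustarᴴ) = ((-1 : ℂ)) • (Ustar * Ustarᴴ) := by simp
    rw [hneg]
    exact le_trans (aux_rank_smul_le _ _) h2
  rw [sub_eq_add_neg]
  calc (U * Uᴴ + -(Ustar * Ustarᴴ)).rank ≤ (U * Uᴴ).rank + (-(Ustar * Ustarᴴ)).rank :=
        aux_rank_add_le _ _
    _ ≤ r + r := add_le_add h1 h3
    _ = 2 * r := by ring

/-- Gradient approximation bound. -/
theorem stmt_10 {D K r : ℕ} (hD : 0 < D) (hK : 0 < K) (hr : 0 < r) (hrD : r ≤ D)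
    (A : Fin K → Matrix (Fin D) (Fin D) ℂ) (hA : ∀ k, (A k).IsHermitian)
    (Ustar : Matrix (Fin D) (Fin r) ℂ) (hUstar : frobNorm Ustar = 1)
    (δ : ℝ) (hδ0 : 0 ≤ δ) (hδ1 : δ < 1) (hRIP : IsRIP A (3 * r) δ)
    (yhat e : Fin K → ℝ)
    (he : ∀ k, (e k : ℂ) = (yhat k : ℂ) - Matrix.trace (A k * (Ustar * Ustarᴴ)))
    (U : Matrix (Fin D) (Fin r) ℂ) (R : Matrix (Fin r) (Fin r) ℂ)
    (hRunit : Rᴴ * R = 1)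
    (hRmin : ∀ R' : Matrix (Fin r) (Fin r) ℂ, R'ᴴ * R' = 1 →
      frobNorm (U - Ustar * R) ≤ frobNorm (U - Ustar * R'))
    (hclose : frobNorm (U - Ustar * R) ≤ sigmaMin Ustar / 4) :
    frobNorm (wGrad A yhat U - (U * Uᴴ - Ustar * Ustarᴴ) * U) ≤
      5 * δ / 2 * frobNorm (U * Uᴴ - Ustar * Ustarᴴ)
        + 5 * (D : ℝ) / (4 * (K : ℝ)) * specNorm (adjointMap A e) := by
  have hZrank := aux_rank_sub_le_2r U Ustar
  -- decomposition
  have hcoef : ∀ k : Fin K, Matrix.trace (A k * (U * Uᴴ)) - (yhat k : ℂ)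
      = Matrix.trace (A k * (U * Uᴴ - Ustar * Ustarᴴ)) - (e k : ℂ) := by
    intro k
    rw [he k, Matrix.mul_sub, Matrix.trace_sub]
    ring
  have hsplit : ∑ k, (Matrix.trace (A k * (U * Uᴴ - Ustar * Ustarᴴ)) - (e k : ℂ)) • (A k * U)
      = (∑ k, Matrix.trace (A k * (U * Uᴴ - Ustar * Ustarᴴ)) • A k) * U
        - adjointMap A e * U := by
    rw [adjointMap, Matrix.sum_mul, Matrix.sum_mul, ← Finset.sum_sub_distrib]
    apply Finset.sum_congr rfl; intro k _
    rw [sub_smul, Matrix.smul_mul, Matrix.smul_mul]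
  have hdecomp : wGrad A yhat U - (U * Uᴴ - Ustar * Ustarᴴ) * U
      = (((D : ℂ) / (K : ℂ)) • ∑ k, Matrix.trace (A k * (U * Uᴴ - Ustar * Ustarᴴ)) • A k
          - (U * Uᴴ - Ustar * Ustarᴴ)) * U
        - ((D : ℂ) / (K : ℂ)) • (adjointMap A e * U) := by
    rw [wGrad]
    simp only [hcoef]
    rw [hsplit]
    simp only [Matrix.sub_mul, Matrix.smul_mul, smul_sub]
    abel
  have hMU := aux_MU_bound hδ0 hRIP hA _ hZrank U
  have hAU : frobNorm (((D : ℂ) / (K : ℂ)) • (adjointMap A e * U))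
      ≤ (D : ℝ) / (K : ℝ) * (specNorm (adjointMap A e) * frobNorm U) := by
    rw [frob_smul, norm_div, Complex.norm_natCast, Complex.norm_natCast]
    exact mul_le_mul_of_nonneg_left (spec_mul_frob _ _) (by positivity)
  -- bound on frobNorm U
  have hUR : frobNorm (Ustar * R) = 1 := by
    have hRR : R * Rᴴ = 1 := mul_eq_one_comm.mp hRunit
    have hsq : frobNorm (Ustar * R) ^ 2 = 1 := by
      rw [frob_sq]
      have htr : Matrix.trace ((Ustar * R)ᴴ * (Ustar * R)) = Matrix.trace (Ustarᴴ * Ustar) := by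
        calc Matrix.trace ((Ustar * R)ᴴ * (Ustar * R))
            = Matrix.trace ((Ustar * R) * (Ustar * R)ᴴ) := (Matrix.trace_mul_comm _ _)
          _ = Matrix.trace (Ustar * (R * (Rᴴ * Ustarᴴ))) := by
              rw [Matrix.conjTranspose_mul]
              simp only [Matrix.mul_assoc]
          _ = Matrix.trace (Ustar * Ustarᴴ) := by
              rw [← Matrix.mul_assoc R, hRR, Matrix.one_mul]
          _ = Matrix.trace (Ustarᴴ * Ustar) := Matrix.trace_mul_comm _ _
      rw [htr, ← frob_sq, hUstar]
      norm_num
    have hnn := frob_nonneg (Ustar * R)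
    nlinarith
  have hsig : sigmaMin Ustar ≤ 1 := sigmaMin_le_one hr Ustar hUstar
  have hUb : frobNorm U ≤ 5 / 4 := by
    have htri : frobNorm U ≤ frobNorm (U - Ustar * R) + frobNorm (Ustar * R) := by
      have h := frob_add_le (U - Ustar * R) (Ustar * R)
      simpa using h
    linarith
  -- assemble
  rw [hdecomp]
  have hfinal := frob_sub_le
    ((((D : ℂ) / (K : ℂ)) • ∑ k, Matrix.trace (A k * (U * Uᴴ - Ustar * Ustarᴴ)) • A k
      - (U * Uᴴ - Ustar * Ustarᴴ)) * U)
    (((D : ℂ) / (K : ℂ)) • (adjointMap A e * U))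
  have hZ0 := frob_nonneg (U * Uᴴ - Ustar * Ustarᴴ)
  have hS0 := specNorm_nonneg (adjointMap A e)
  have hU0 := frob_nonneg U
  have hDK : (0 : ℝ) ≤ (D : ℝ) / (K : ℝ) := by positivity
  have t1 : δ * frobNorm (U * Uᴴ - Ustar * Ustarᴴ) * frobNorm U
      ≤ δ * frobNorm (U * Uᴴ - Ustar * Ustarᴴ) * (5 / 4) :=
    mul_le_mul_of_nonneg_left hUb (mul_nonneg hδ0 hZ0)
  have t2 : (D : ℝ) / (K : ℝ) * (specNorm (adjointMap A e) * frobNorm U)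
      ≤ (D : ℝ) / (K : ℝ) * (specNorm (adjointMap A e) * (5 / 4)) :=
    mul_le_mul_of_nonneg_left (mul_le_mul_of_nonneg_left hUb hS0) hDK
  have hrw : 5 * (D : ℝ) / (4 * (K : ℝ)) = (D : ℝ) / (K : ℝ) * (5 / 4) := by
    field_simp
  calc _ ≤ _ := hfinal
    _ ≤ δ * frobNorm (U * Uᴴ - Ustar * Ustarᴴ) * frobNorm U
        + (D : ℝ) / (K : ℝ) * (specNorm (adjointMap A e) * frobNorm U) := add_le_add hMU hAU
    _ ≤ 5 * δ / 2 * frobNorm (U * Uᴴ - Ustar * Ustarᴴ)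
        + 5 * (D : ℝ) / (4 * (K : ℝ)) * specNorm (adjointMap A e) := by
      rw [hrw]
      nlinarith [t1, t2, mul_nonneg hδ0 hZ0]
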